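/- arXiv:1403.7602 — 2 statements merged into one kernel-verified Lean document; each statement's English description precedes it below -/
import Mathlib

section
/- The Cayley graph of D₆ × ℤ₃ = ⟨x, u, v⟩, where x² = u³ = v³ = 1, u and v commute, xux = u, and xvx = v⁻¹, with connection set {xu, xu⁻¹, xv} has √3 as an eigenvalue; in particular, D₆ × ℤ₃ admits a non-integral Cayley graph with connection set of size 3. -/
/-- The Cayley graph of a group `G` with connection set `S`. For a symmetric set `S`
with `1 ∉ S`, `g` and `h` are adjacent iff `h * g⁻¹ ∈ S`. -/
def cayley {G : Type*} [Group G] (S : Set G) : SimpleGraph G :=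
  SimpleGraph.fromRel (fun g h => h * g⁻¹ ∈ S)

/-- A finite graph is integral if all eigenvalues of its adjacency matrix are integers. -/
def IsIntegralGraph {V : Type*} [Finite V] (Γ : SimpleGraph V) : Prop :=
  letI := Fintype.ofFinite V
  letI := Classical.decEq V
  letI : DecidableRel Γ.Adj := Classical.decRel _
  ∀ μ ∈ spectrum ℝ (Γ.adjMatrix ℝ), ∃ z : ℤ, (z : ℝ) = μ

/-- `μ` is an eigenvalue of the adjacency matrix of the finite graph `Γ`. -/
def IsAdjEigenvalue {V : Type*} [Finite V] (Γ : SimpleGraph V) (μ : ℝ) : Prop :=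
  letI := Fintype.ofFinite V
  letI := Classical.decEq V
  letI : DecidableRel Γ.Adj := Classical.decRel _
  μ ∈ spectrum ℝ (Γ.adjMatrix ℝ)

namespace D6Z3Aux

open DihedralGroup

abbrev K18 := DihedralGroup 3 × Multiplicative (ZMod 3)

def s1 : K18 := (sr 0, Multiplicative.ofAdd 1)
def s2 : K18 := (sr 0, Multiplicative.ofAdd 2)
def s3 : K18 := (sr 1, 1)

def Prel (j k : K18) : Prop :=
  j ≠ k ∧ ((k * j⁻¹ = s1 ∨ k * j⁻¹ = s2 ∨ k * j⁻¹ = s3) ∨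
    (j * k⁻¹ = s1 ∨ j * k⁻¹ = s2 ∨ j * k⁻¹ = s3))

instance (j k : K18) : Decidable (Prel j k) := by unfold Prel s1 s2 s3; infer_instance

def pInt : K18 → ℤ := fun k =>
  if k = (sr 0, 1) then -3 else if k = (sr 1, 1) then 3 else 0

def qInt : K18 → ℤ := fun k =>
  if k = (r 0, 1) then 1
  else if k = (r 0, Multiplicative.ofAdd 1) then -1
  else if k = (r 0, Multiplicative.ofAdd 2) then -1
  else if k = (r 1, Multiplicative.ofAdd 1) then 1
  else if k = (r 1, Multiplicative.ofAdd 2) then 1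
  else if k = (r 2, 1) then -1
  else 0

lemma key_p : ∀ j : K18, (∑ k : K18, if Prel j k then pInt k else 0) = 3 * qInt j := by
  decide

lemma key_q : ∀ j : K18, (∑ k : K18, if Prel j k then qInt k else 0) = pInt j := by
  decide

section GroupLemmas

variable {G : Type*} [Group G]

lemma pow_mod3 {a : G} (ha : a ^ 3 = 1) (n : ℕ) : a ^ (n % 3) = a ^ n := by
  conv_rhs => rw [← Nat.div_add_mod n 3]
  rw [pow_add, pow_mul, ha, one_pow, one_mul]

/-- `a ^ i` for `i : ZMod 3`. -/
def zpow3 (a : G) (i : ZMod 3) : G := a ^ i.val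

lemma zpow3_add {a : G} (ha : a ^ 3 = 1) (i j : ZMod 3) :
    zpow3 a (i + j) = zpow3 a i * zpow3 a j := by
  unfold zpow3
  rw [ZMod.val_add, pow_mod3 ha, pow_add]

lemma zpow3_zero (a : G) : zpow3 a 0 = 1 := by simp [zpow3, ZMod.val_zero]

lemma zpow3_neg {a : G} (ha : a ^ 3 = 1) (i : ZMod 3) : zpow3 a (-i) = (zpow3 a i)⁻¹ := by
  apply eq_inv_of_mul_eq_one_left
  rw [← zpow3_add ha, neg_add_cancel, zpow3_zero]

lemma zpow3_commute (a : G) (i j : ZMod 3) : Commute (zpow3 a i) (zpow3 a j) :=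
  (Commute.refl a).pow_pow _ _

variable {x u v : G}

lemma xx (hx : x ^ 2 = 1) : x * x = 1 := by rwa [← sq]

lemma x_inv (hx : x ^ 2 = 1) : x⁻¹ = x :=
  inv_eq_of_mul_eq_one_right (xx hx)

lemma vx (hx : x ^ 2 = 1) (hxv : x * v * x = v⁻¹) : v * x = x * v⁻¹ := by
  have h1 : x * v = v⁻¹ * x := by
    have := congrArg (· * x) hxv
    simpa [mul_assoc, xx hx] using this
  calc v * x = v * (x * v) * v⁻¹ := by group
    _ = v * (v⁻¹ * x) * v⁻¹ := by rw [h1]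
    _ = x * v⁻¹ := by group

lemma pow_mul_x (hx : x ^ 2 = 1) (hxv : x * v * x = v⁻¹) (n : ℕ) :
    v ^ n * x = x * v⁻¹ ^ n := by
  induction n with
  | zero => simp
  | succ n ih =>
    rw [pow_succ, pow_succ, mul_assoc, vx hx hxv, ← mul_assoc, ih, mul_assoc]

lemma zpow3_mul_x (hx : x ^ 2 = 1) (hxv : x * v * x = v⁻¹) (i : ZMod 3) :
    zpow3 v i * x = x * (zpow3 v i)⁻¹ := by
  unfold zpow3
  rw [pow_mul_x hx hxv, inv_pow]

/-- the underlying map of the dihedral part. -/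
def dmap (x v : G) : DihedralGroup 3 → G
  | .r i => zpow3 v i
  | .sr i => x * zpow3 v i

/-- The hom `DihedralGroup 3 →* G`. -/
def dhom (hx : x ^ 2 = 1) (hv : v ^ 3 = 1) (hxv : x * v * x = v⁻¹) :
    DihedralGroup 3 →* G where
  toFun := dmap x v
  map_one' := by
    show dmap x v (r 0) = 1
    simp [dmap, zpow3_zero]
  map_mul' := by
    rintro (i | i) (j | j)
    · show zpow3 v (i + j) = zpow3 v i * zpow3 v j
      exact zpow3_add hv i j
    · show x * zpow3 v (j - i) = zpow3 v i * (x * zpow3 v j)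
      rw [sub_eq_add_neg, add_comm j, zpow3_add hv, zpow3_neg hv, ← mul_assoc,
        ← zpow3_mul_x hx hxv, mul_assoc]
    · show x * zpow3 v (i + j) = x * zpow3 v i * zpow3 v j
      rw [zpow3_add hv, mul_assoc]
    · show zpow3 v (j - i) = (x * zpow3 v i) * (x * zpow3 v j)
      have h1 : (x * zpow3 v i) * (x * zpow3 v j)
          = x * (zpow3 v i * x) * zpow3 v j := by group
      rw [h1, zpow3_mul_x hx hxv]
      rw [show x * (x * (zpow3 v i)⁻¹) * zpow3 v j = x * x * (zpow3 v i)⁻¹ * zpow3 v j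
        from by group, xx hx, one_mul, sub_eq_add_neg, add_comm j, zpow3_add hv, zpow3_neg hv]

lemma dhom_r (hx : x ^ 2 = 1) (hv : v ^ 3 = 1) (hxv : x * v * x = v⁻¹) (i : ZMod 3) :
    dhom hx hv hxv (r i) = zpow3 v i := rfl

lemma dhom_sr (hx : x ^ 2 = 1) (hv : v ^ 3 = 1) (hxv : x * v * x = v⁻¹) (i : ZMod 3) :
    dhom hx hv hxv (sr i) = x * zpow3 v i := rfl

/-- The hom `Multiplicative (ZMod 3) →* G` sending the generator to `u`. -/
def uhom (hu : u ^ 3 = 1) : Multiplicative (ZMod 3) →* G where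
  toFun z := zpow3 u z.toAdd
  map_one' := zpow3_zero u
  map_mul' a b := zpow3_add hu _ _

end GroupLemmas

end D6Z3Aux

open D6Z3Aux DihedralGroup in
theorem D6_times_Z3_cayley_not_integral (G : Type*) [Group G] [Finite G]
    (hcard : Nat.card G = 18)
    (x u v : G) (hx : x ^ 2 = 1) (hu : u ^ 3 = 1) (hv : v ^ 3 = 1)
    (huv : u * v = v * u) (hxu : x * u * x = u) (hxv : x * v * x = v⁻¹)
    (hgen : Subgroup.closure {x, u, v} = ⊤) :
    IsAdjEigenvalue (cayley ({x * u, x * u⁻¹, x * v} : Set G)) (Real.sqrt 3) ∧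
      ¬ IsIntegralGraph (cayley ({x * u, x * u⁻¹, x * v} : Set G)) := by
  letI : Fintype G := Fintype.ofFinite G
  letI : DecidableEq G := Classical.decEq G
  set S : Set G := {x * u, x * u⁻¹, x * v} with hS
  letI : DecidableRel (cayley S).Adj := Classical.decRel _
  -- basic commutation facts
  have hxx : x * x = 1 := xx hx
  have cxu : Commute x u := by
    have := congrArg (· * x) hxu
    simp only [mul_assoc, hxx, mul_one] at this
    exact this
  have cvu : Commute v u := huv.symm
  -- the isomorphism from the model group
  have comm : ∀ (d : DihedralGroup 3) (z : Multiplicative (ZMod 3)),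
      Commute (dhom hx hv hxv d) (uhom hu z) := by
    rintro (i | i) z
    · exact cvu.pow_pow _ _
    · exact Commute.mul_left (cxu.pow_right _) (cvu.pow_pow _ _)
  set φ : K18 →* G := (dhom hx hv hxv).noncommCoprod (uhom hu) comm with hφ
  have hval0 : (0 : ZMod 3).val = 0 := rfl
  have hval1 : (1 : ZMod 3).val = 1 := rfl
  have hval2 : (2 : ZMod 3).val = 2 := rfl
  have hφx : φ ((sr 0, 1) : K18) = x := by
    simp [hφ, MonoidHom.noncommCoprod_apply, dhom_sr, uhom, zpow3, hval0]
  have hφu : φ ((r 0, Multiplicative.ofAdd 1) : K18) = u := by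
    simp [hφ, MonoidHom.noncommCoprod_apply, dhom_r, uhom, zpow3, hval0, hval1]
  have hφv : φ ((r 1, 1) : K18) = v := by
    simp [hφ, MonoidHom.noncommCoprod_apply, dhom_r, uhom, zpow3, hval0, hval1]
  have hsurj : Function.Surjective φ := by
    rw [← MonoidHom.range_eq_top]
    rw [← top_le_iff, ← hgen]
    apply Subgroup.closure_le _ |>.mpr
    rintro g (rfl | rfl | rfl)
    · exact ⟨(sr 0, 1), hφx⟩
    · exact ⟨(r 0, Multiplicative.ofAdd 1), hφu⟩
    · exact ⟨(r 1, 1), hφv⟩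
  have hcardK : Nat.card K18 = 18 := by
    rw [Nat.card_prod, DihedralGroup.nat_card]
    simp [Nat.card_eq_fintype_card]
  have hbij : Function.Bijective φ :=
    (Nat.bijective_iff_surjective_and_card φ).mpr ⟨hsurj, by rw [hcardK, hcard]⟩
  set e : K18 ≃* G := MulEquiv.ofBijective φ hbij with he
  have heapp : ∀ k : K18, e k = φ k := fun _ => rfl
  -- images of connection set
  have hu2 : u ^ 2 = u⁻¹ := by
    apply eq_inv_of_mul_eq_one_left
    rw [← pow_succ]; exact hu
  have hes1 : e s1 = x * u := by
    rw [heapp, s1, hφ, MonoidHom.noncommCoprod_apply, dhom_sr]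
    simp [uhom, zpow3, hval0, hval1]
  have hes2 : e s2 = x * u⁻¹ := by
    rw [heapp, s2, hφ, MonoidHom.noncommCoprod_apply, dhom_sr]
    simp [uhom, zpow3, hval0, hval2, hu2]
  have hes3 : e s3 = x * v := by
    rw [heapp, s3, hφ, MonoidHom.noncommCoprod_apply, dhom_sr]
    simp [uhom, zpow3, hval0, hval1]
  -- membership bridge
  have hmem : ∀ m : K18, (e m ∈ S) ↔ (m = s1 ∨ m = s2 ∨ m = s3) := by
    intro m
    rw [hS, ← hes1, ← hes2, ← hes3]
    simp only [Set.mem_insert_iff, Set.mem_singleton_iff, e.injective.eq_iff]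
  have hadj : ∀ j k : K18, (cayley S).Adj (e j) (e k) ↔ Prel j k := by
    intro j k
    rw [cayley, SimpleGraph.fromRel_adj]
    constructor
    · rintro ⟨hne, h | h⟩
      · refine ⟨fun hjk => hne (by rw [hjk]), Or.inl ?_⟩
        rw [← (hmem (k * j⁻¹)), map_mul, map_inv]
        exact h
      · refine ⟨fun hjk => hne (by rw [hjk]), Or.inr ?_⟩
        rw [← (hmem (j * k⁻¹)), map_mul, map_inv]
        exact h
    · rintro ⟨hne, h | h⟩
      · exact ⟨fun hee => hne (e.injective hee), Or.inl (by
          rw [← map_inv, ← map_mul] at *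
          exact (hmem (k * j⁻¹)).mpr h)⟩
      · exact ⟨fun hee => hne (e.injective hee), Or.inr (by
          rw [← map_inv, ← map_mul] at *
          exact (hmem (j * k⁻¹)).mpr h)⟩
  -- the eigenvector
  set f : G → ℝ := fun g => (pInt (e.symm g) : ℝ) + (qInt (e.symm g) : ℝ) * Real.sqrt 3
    with hf
  have hfe : ∀ k : K18, f (e k) = (pInt k : ℝ) + (qInt k : ℝ) * Real.sqrt 3 := by
    intro k; rw [hf]; simp
  have h33 : Real.sqrt 3 * Real.sqrt 3 = 3 := Real.mul_self_sqrt (by norm_num)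
  have hAf : Matrix.mulVec ((cayley S).adjMatrix ℝ) f = Real.sqrt 3 • f := by
    funext g
    obtain ⟨j, rfl⟩ := e.surjective g
    show ∑ h : G, (cayley S).adjMatrix ℝ (e j) h * f h = (Real.sqrt 3 • f) (e j)
    have hsummand : ∀ k : K18, (cayley S).adjMatrix ℝ (e j) (e k) * f (e k)
        = ((if Prel j k then pInt k else 0 : ℤ) : ℝ)
          + ((if Prel j k then qInt k else 0 : ℤ) : ℝ) * Real.sqrt 3 := by
      intro k
      rw [SimpleGraph.adjMatrix_apply, hfe]
      by_cases hk : Prel j k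
      · rw [if_pos ((hadj j k).mpr hk), if_pos hk, if_pos hk]; ring
      · rw [if_neg (fun h => hk ((hadj j k).mp h)), if_neg hk, if_neg hk]; ring
    rw [← Fintype.sum_bijective (⇑e) e.bijective
      (fun k => (cayley S).adjMatrix ℝ (e j) (e k) * f (e k))
      (fun h => (cayley S).adjMatrix ℝ (e j) h * f h) (fun k => rfl)]
    rw [Finset.sum_congr rfl (fun k _ => hsummand k), Finset.sum_add_distrib,
      ← Finset.sum_mul, ← Int.cast_sum, ← Int.cast_sum, key_p j, key_q j,
      Pi.smul_apply, hfe, smul_eq_mul]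
    push_cast
    linear_combination (-(qInt j : ℝ)) * h33
  have hfne : f ≠ 0 := by
    intro h0
    have h1 : f (e s3) = 3 := by
      rw [hfe]
      have hp : pInt s3 = 3 := by decide
      have hq : qInt s3 = 0 := by decide
      rw [hp, hq]; norm_num
    rw [h0] at h1
    norm_num at h1
  have hspec : Real.sqrt 3 ∈ spectrum ℝ ((cayley S).adjMatrix ℝ) := by
    rw [spectrum.mem_iff, Matrix.isUnit_iff_isUnit_det, isUnit_iff_ne_zero]
    intro hdet
    apply hdet
    rw [← Matrix.exists_mulVec_eq_zero_iff]
    refine ⟨f, hfne, ?_⟩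
    have halg : (algebraMap ℝ (Matrix G G ℝ)) (Real.sqrt 3)
        = Real.sqrt 3 • (1 : Matrix G G ℝ) := Algebra.algebraMap_eq_smul_one _
    rw [halg, Matrix.sub_mulVec, Matrix.smul_mulVec, Matrix.one_mulVec, hAf, sub_self]
  constructor
  · show Real.sqrt 3 ∈ spectrum ℝ ((cayley S).adjMatrix ℝ)
    exact hspec
  · intro hInt
    have hAll : ∀ μ ∈ spectrum ℝ ((cayley S).adjMatrix ℝ), ∃ z : ℤ, (z : ℝ) = μ := hInt
    obtain ⟨z, hz⟩ := hAll (Real.sqrt 3) hspec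
    have hirr : Irrational (Real.sqrt 3) := by
      have := Nat.prime_three.irrational_sqrt
      simpa using this
    exact hirr ⟨(z : ℚ), by rw [Rat.cast_intCast, hz]⟩
end

section
/- Let G be a finite 2-group of exponent 4 in which every involution is central. Then for every symmetric subset S ⊆ G with 1 ∉ S and |S| ≤ 3, the subgroup generated by S is abelian, and consequently the Cayley graph Cay(G,S) is integral. -/
section RingLemmas
variable {R : Type*} [Ring R]

lemma L1 (B C : R) (hB : B * B = 1) (hC : C * C = 1) (h : B * C = C * B) :
    (B + C) ^ 3 = 4 * (B + C) := by
  have h2 : C * B = B * C := h.symm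
  have sB : ∀ x : R, B * (B * x) = x := fun x => by rw [← mul_assoc, hB, one_mul]
  have sC : ∀ x : R, C * (C * x) = x := fun x => by rw [← mul_assoc, hC, one_mul]
  have sw : ∀ x : R, C * (B * x) = B * (C * x) := fun x => by
    rw [← mul_assoc, h2, mul_assoc]
  calc (B + C) ^ 3
      = B * (B * B) + (C * (B * B) + (B * (C * B) + (C * (C * B) +
        (B * (B * C) + (C * (B * C) + (B * (C * C) + C * (C * C))))))) := by noncomm_ring
    _ = 4 * (B + C) := by
        simp only [sw, sB, sC, h2, hB, hC, mul_one]
        noncomm_ring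

lemma L2 (P : R) (hP : P ^ 4 = 1) : (P + P ^ 3) ^ 3 = 4 * (P + P ^ 3) := by
  have h5 : P ^ 5 = P := by
    rw [show (5 : ℕ) = 4 + 1 from rfl, pow_add, hP, one_mul, pow_one]
  have h7 : P ^ 7 = P ^ 3 := by
    rw [show (7 : ℕ) = 4 + 3 from rfl, pow_add, hP, one_mul]
  have h9 : P ^ 9 = P := by
    rw [show (9 : ℕ) = 4 + 5 from rfl, pow_add, hP, one_mul, h5]
  calc (P + P ^ 3) ^ 3 = P ^ 3 + 3 * P ^ 5 + 3 * P ^ 7 + P ^ 9 := by noncomm_ring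
    _ = 4 * (P + P ^ 3) := by rw [h5, h7, h9]; noncomm_ring

lemma L3 (B C : R) (hB : B * B = 1) (hC : C ^ 3 = 4 * C) (h : B * C = C * B) :
    ((B + C) ^ 2 - 1) * ((B + C) ^ 2 - 9) = 0 := by
  have h2 : C * B = B * C := h.symm
  have sB : ∀ x : R, B * (B * x) = x := fun x => by rw [← mul_assoc, hB, one_mul]
  have sw : ∀ x : R, C * (B * x) = B * (C * x) := fun x => by
    rw [← mul_assoc, h2, mul_assoc]
  have hC3' : C * (C * C) = 4 * C := by
    have e : C ^ 3 = C * (C * C) := by noncomm_ring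
    rw [← e, hC]
  have e1 : (B + C) ^ 2 = 1 + (2 * (B * C) + C * C) := by
    calc (B + C) ^ 2 = B * B + (C * B + (B * C + C * C)) := by noncomm_ring
      _ = 1 + (2 * (B * C) + C * C) := by rw [hB, h2]; noncomm_ring
  rw [e1]
  have hu2 : (2 * (B * C) + C * C) * (2 * (B * C) + C * C)
      = 8 * (2 * (B * C) + C * C) := by
    calc (2 * (B * C) + C * C) * (2 * (B * C) + C * C)
        = 4 * (B * (C * (B * C))) + 2 * (B * (C * (C * C)))
          + 2 * (C * (C * (B * C))) + C * (C * (C * C)) := by noncomm_ring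
      _ = 8 * (2 * (B * C) + C * C) := by
          simp only [sw, sB, hC3']
          noncomm_ring
  calc (1 + (2 * (B * C) + C * C) - 1) * (1 + (2 * (B * C) + C * C) - 9)
      = (2 * (B * C) + C * C) * (2 * (B * C) + C * C)
        - 8 * (2 * (B * C) + C * C) := by noncomm_ring
    _ = 0 := by rw [hu2, sub_self]

end RingLemmas

section Pmat
variable {G : Type*} [Group G] [Fintype G] [DecidableEq G]

/-- The permutation matrix of left translation by `x`. -/
def pmat (x : G) : Matrix G G ℝ := fun g h => if h = x * g then 1 else 0

lemma pmat_mul (x y : G) : pmat x * pmat y = pmat (y * x) := by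
  ext g h
  simp only [pmat, Matrix.mul_apply, ite_mul, one_mul, zero_mul]
  rw [Finset.sum_ite_eq' Finset.univ (x * g) (fun k => if h = y * k then (1:ℝ) else 0)]
  simp [mul_assoc]

omit [Fintype G] in
lemma pmat_one : pmat (1 : G) = 1 := by
  ext g h
  simp [pmat, Matrix.one_apply, eq_comm]

lemma pmat_sq (x : G) (hx : x * x = 1) : pmat x * pmat x = 1 := by
  rw [pmat_mul, hx, pmat_one]

lemma pmat_pow (x : G) (n : ℕ) : (pmat x) ^ n = pmat (x ^ n) := by
  induction n with
  | zero => simp [pmat_one]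
  | succ n ih => rw [pow_succ, ih, pmat_mul, ← pow_succ']

lemma pmat_comm {x y : G} (h : Commute x y) : pmat x * pmat y = pmat y * pmat x := by
  rw [pmat_mul, pmat_mul, h.eq]

/-- The adjacency matrix of the Cayley graph is the sum of permutation matrices. -/
lemma adjMatrix_eq_sum (S : Finset G) (h1 : (1 : G) ∉ S) (hsym : ∀ s ∈ S, s⁻¹ ∈ S)
    [DecidableRel (cayley (S : Set G)).Adj] :
    (cayley (S : Set G)).adjMatrix ℝ = ∑ s ∈ S, pmat s := by
  ext g h
  have hadj : (cayley (S : Set G)).Adj g h ↔ h * g⁻¹ ∈ S := by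
    rw [cayley, SimpleGraph.fromRel_adj]
    constructor
    · rintro ⟨hne, hc | hc⟩
      · exact hc
      · have := hsym _ hc
        rwa [mul_inv_rev, inv_inv] at this
    · intro hs
      refine ⟨fun hgh => h1 ?_, Or.inl hs⟩
      subst hgh
      simpa using hs
  have hsum : (∑ s ∈ S, pmat s) g h = if h * g⁻¹ ∈ S then (1:ℝ) else 0 := by
    rw [Matrix.sum_apply]
    have he : ∀ s : G, (h = s * g) = (s = h * g⁻¹) := by
      intro s
      apply propext
      constructor
      · rintro rfl; group
      · rintro rfl; group
    simp only [pmat, he]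
    rw [Finset.sum_ite_eq' S (h * g⁻¹) (fun _ => (1:ℝ))]
  rw [hsum, SimpleGraph.adjMatrix_apply]
  by_cases hc : h * g⁻¹ ∈ S <;> simp [hadj, hc]

end Pmat

open Polynomial in
lemma spec_int {n : Type*} [Fintype n] [DecidableEq n] [Nonempty n] (A : Matrix n n ℝ)
    (h : A * (A ^ 2 - 1) * (A ^ 2 - 4) * (A ^ 2 - 9) = 0) :
    ∀ μ ∈ spectrum ℝ A, ∃ z : ℤ, (z : ℝ) = μ := by
  intro μ hμ
  set p : ℝ[X] := X * (X ^ 2 - C 1) * (X ^ 2 - C 4) * (X ^ 2 - C 9) with hp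
  have haev : aeval A p = 0 := by
    rw [hp]
    simp only [map_mul, map_sub, map_pow, aeval_X, aeval_C]
    rw [show (algebraMap ℝ (Matrix n n ℝ)) 1 = 1 from map_one _,
        show (algebraMap ℝ (Matrix n n ℝ)) 4 = 4 from map_ofNat _ 4,
        show (algebraMap ℝ (Matrix n n ℝ)) 9 = 9 from map_ofNat _ 9]
    exact h
  have hmem : eval μ p ∈ spectrum ℝ (aeval A p) :=
    spectrum.subset_polynomial_aeval A p ⟨μ, hμ, rfl⟩
  rw [haev, spectrum.zero_eq] at hmem
  have hev : μ * (μ ^ 2 - 1) * (μ ^ 2 - 4) * (μ ^ 2 - 9) = 0 := by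
    simpa [hp] using hmem
  have h1 : (μ - 1) * (μ + 1) = μ ^ 2 - 1 := by ring
  have h4 : (μ - 2) * (μ + 2) = μ ^ 2 - 4 := by ring
  have h9 : (μ - 3) * (μ + 3) = μ ^ 2 - 9 := by ring
  rw [← h1, ← h4, ← h9] at hev
  rcases mul_eq_zero.mp hev with hev | hev
  · rcases mul_eq_zero.mp hev with hev | hev
    · rcases mul_eq_zero.mp hev with hev | hev
      · exact ⟨0, by simpa using hev.symm⟩
      · rcases mul_eq_zero.mp hev with hev | hev
        · exact ⟨1, by push_cast; linarith⟩
        · exact ⟨-1, by push_cast; linarith⟩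
    · rcases mul_eq_zero.mp hev with hev | hev
      · exact ⟨2, by push_cast; linarith⟩
      · exact ⟨-2, by push_cast; linarith⟩
  · rcases mul_eq_zero.mp hev with hev | hev
    · exact ⟨3, by push_cast; linarith⟩
    · exact ⟨-3, by push_cast; linarith⟩

lemma integral_of_ann {V : Type*} [Finite V] [Nonempty V] (Γ : SimpleGraph V)
    (h : ∀ (_ : Fintype V) (_ : DecidableEq V) (_ : DecidableRel Γ.Adj),
      Γ.adjMatrix ℝ * ((Γ.adjMatrix ℝ) ^ 2 - 1) * ((Γ.adjMatrix ℝ) ^ 2 - 4)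
        * ((Γ.adjMatrix ℝ) ^ 2 - 9) = 0) :
    IsIntegralGraph Γ := by
  unfold IsIntegralGraph
  exact @spec_int V (Fintype.ofFinite V) (Classical.decEq V) ‹Nonempty V› _
    (h (Fintype.ofFinite V) (Classical.decEq V) (Classical.decRel _))

theorem small_sets_generate_abelian (G : Type*) [Group G] [Finite G]
    (hp : IsPGroup 2 G) (hexp : Monoid.exponent G = 4)
    (hcent : ∀ t : G, orderOf t = 2 → t ∈ Subgroup.center G) :
    ∀ S : Finset G, (1 : G) ∉ S → (∀ s ∈ S, s⁻¹ ∈ S) → S.card ≤ 3 →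
      (∀ x ∈ Subgroup.closure (S : Set G), ∀ y ∈ Subgroup.closure (S : Set G),
        x * y = y * x) ∧
      IsIntegralGraph (cayley (S : Set G)) := by
  intro S h1S hsym hcard
  classical
  have h4 : ∀ s ∈ S, s ^ 4 = 1 := fun s _ => by
    rw [← hexp]; exact Monoid.pow_exponent_eq_one s
  have hne1 : ∀ s ∈ S, s ≠ 1 := fun s hs h => h1S (h ▸ hs)
  have hcent' : ∀ s ∈ S, s * s = 1 → ∀ g : G, Commute s g := by
    intro s hs h2 g
    have ho : orderOf s = 2 := orderOf_eq_prime (by rw [pow_two]; exact h2) (hne1 s hs)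
    exact ((Subgroup.mem_center_iff.mp (hcent s ho)) g).symm
  have hfour : ∀ a ∈ S, ∀ b ∈ S, a * a ≠ 1 → b * b ≠ 1 → b ≠ a → b ≠ a⁻¹ → False := by
    intro a ha b hb ha2 hb2 hba hbai
    have hai : a⁻¹ ∈ S := hsym a ha
    have hbi : b⁻¹ ∈ S := hsym b hb
    have haa : a ≠ a⁻¹ := fun h => ha2 (by rw [← eq_inv_iff_mul_eq_one]; exact h)
    have hbb : b ≠ b⁻¹ := fun h => hb2 (by rw [← eq_inv_iff_mul_eq_one]; exact h)
    have hb1 : b⁻¹ ≠ a := fun h => hbai (by rw [← h, inv_inv])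
    have hb2' : b⁻¹ ≠ a⁻¹ := fun h => hba (inv_injective h)
    have hsub : ({a, a⁻¹, b, b⁻¹} : Finset G) ⊆ S := by
      intro x hx
      simp only [Finset.mem_insert, Finset.mem_singleton] at hx
      rcases hx with rfl | rfl | rfl | rfl <;> assumption
    have c1 : b ∉ ({b⁻¹} : Finset G) := by simp [hbb]
    have c2 : a⁻¹ ∉ ({b, b⁻¹} : Finset G) := by
      simp [Ne.symm hbai, Ne.symm hb2']
    have c3 : a ∉ ({a⁻¹, b, b⁻¹} : Finset G) := by
      simp [haa, Ne.symm hba, Ne.symm hb1]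
    have hc4 : ({a, a⁻¹, b, b⁻¹} : Finset G).card = 4 := by
      rw [Finset.card_insert_of_notMem c3, Finset.card_insert_of_notMem c2,
        Finset.card_insert_of_notMem c1, Finset.card_singleton]
    have := Finset.card_le_card hsub
    omega
  have hcomm : ∀ a ∈ S, ∀ b ∈ S, Commute a b := by
    intro a ha b hb
    by_cases ha2 : a * a = 1
    · exact hcent' a ha ha2 b
    by_cases hb2 : b * b = 1
    · exact (hcent' b hb hb2 a).symm
    by_cases hba : b = a
    · subst hba; exact Commute.refl b
    by_cases hbai : b = a⁻¹
    · subst hbai; exact (Commute.refl a).inv_right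
    exact absurd (hfour a ha b hb ha2 hb2 hba hbai) not_false
  constructor
  · intro x hx y hy
    exact (Subgroup.closure_induction₂ (p := fun a b _ _ => Commute a b)
      (fun a b ha hb => hcomm a ha b hb)
      (fun x _ => Commute.one_left x) (fun x _ => Commute.one_right x)
      (fun _ _ _ _ _ _ h1 h2 => h1.mul_left h2)
      (fun _ _ _ _ _ _ h1 h2 => h1.mul_right h2)
      (fun _ _ _ _ h => h.inv_left) (fun _ _ _ _ h => h.inv_right) hx hy).eq
  · haveI : Nonempty G := ⟨1⟩
    apply integral_of_ann
    intro F D DR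
    rw [adjMatrix_eq_sum S h1S hsym]
    set A : Matrix G G ℝ := ∑ s ∈ S, pmat s with hA
    have key : A = 0 ∨ A * A = 1 ∨ A ^ 3 = 4 * A ∨ (A ^ 2 - 1) * (A ^ 2 - 9) = 0 := by
      by_cases hall : ∀ s ∈ S, s * s = 1
      · have hc : S.card = 0 ∨ S.card = 1 ∨ S.card = 2 ∨ S.card = 3 := by omega
        rcases hc with hc | hc | hc | hc
        · left
          rw [hA, Finset.card_eq_zero.mp hc, Finset.sum_empty]
        · obtain ⟨t, rfl⟩ := Finset.card_eq_one.mp hc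
          right; left
          rw [hA, Finset.sum_singleton]
          exact pmat_sq t (hall t (Finset.mem_singleton_self t))
        · obtain ⟨t, u, htu, rfl⟩ := Finset.card_eq_two.mp hc
          right; right; left
          rw [hA, Finset.sum_pair htu]
          have ht : t ∈ ({t, u} : Finset G) := by simp
          have hu : u ∈ ({t, u} : Finset G) := by simp
          exact L1 _ _ (pmat_sq t (hall t ht)) (pmat_sq u (hall u hu))
            (pmat_comm (hcent' t ht (hall t ht) u))
        · obtain ⟨t, u, w, htu, htw, huw, rfl⟩ := Finset.card_eq_three.mp hc
          right; right; right
          have ht : t ∈ ({t, u, w} : Finset G) := by simp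
          have hu : u ∈ ({t, u, w} : Finset G) := by simp
          have hw : w ∈ ({t, u, w} : Finset G) := by simp
          have hsum : A = pmat t + (pmat u + pmat w) := by
            rw [hA, show ({t, u, w} : Finset G) = insert t {u, w} from rfl,
              Finset.sum_insert (by simp [htu, htw]), Finset.sum_pair huw]
          rw [hsum]
          refine L3 _ _ (pmat_sq t (hall t ht)) ?_ ?_
          · exact L1 _ _ (pmat_sq u (hall u hu)) (pmat_sq w (hall w hw))
              (pmat_comm (hcent' u hu (hall u hu) w))
          · rw [mul_add, add_mul, pmat_comm (hcent' t ht (hall t ht) u),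
              pmat_comm (hcent' t ht (hall t ht) w)]
      · push_neg at hall
        obtain ⟨a, ha, ha2⟩ := hall
        have hai : a⁻¹ ∈ S := hsym a ha
        have hne : a ≠ a⁻¹ := fun h => ha2 (by rw [← eq_inv_iff_mul_eq_one]; exact h)
        have hpa3 : pmat a⁻¹ = (pmat a) ^ 3 := by
          have hinv : a⁻¹ = a ^ 3 := by
            rw [inv_eq_iff_mul_eq_one, ← pow_succ']
            have h34 : (3 : ℕ) + 1 = 4 := rfl
            rw [h34]
            exact h4 a ha
          rw [hinv]
          exact (pmat_pow a 3).symm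
        have hp4 : (pmat a : Matrix G G ℝ) ^ 4 = 1 := by
          rw [pmat_pow, h4 a ha, pmat_one]
        have hL2 : (pmat a + pmat a⁻¹) ^ 3 = 4 * (pmat a + pmat a⁻¹) := by
          rw [hpa3]; exact L2 _ hp4
        have hsub2 : ({a, a⁻¹} : Finset G) ⊆ S := by
          intro x hx
          simp only [Finset.mem_insert, Finset.mem_singleton] at hx
          rcases hx with rfl | rfl <;> assumption
        have h2le : 2 ≤ S.card := by
          have := Finset.card_le_card hsub2
          rwa [Finset.card_pair hne] at this
        have hc : S.card = 2 ∨ S.card = 3 := by omega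
        rcases hc with hc | hc
        · have hSeq : ({a, a⁻¹} : Finset G) = S :=
            Finset.eq_of_subset_of_card_le hsub2 (by rw [Finset.card_pair hne]; omega)
          right; right; left
          rw [hA, ← hSeq, Finset.sum_pair hne]
          exact hL2
        · have hcd : (S \ ({a, a⁻¹} : Finset G)).card = 1 := by
            rw [Finset.card_sdiff_of_subset hsub2, Finset.card_pair hne, hc]
          obtain ⟨t, ht⟩ := Finset.card_eq_one.mp hcd
          have htS : t ∈ S := by
            have : t ∈ S \ ({a, a⁻¹} : Finset G) := by rw [ht]; simp
            exact (Finset.mem_sdiff.mp this).1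
          have htn : t ∉ ({a, a⁻¹} : Finset G) := by
            have : t ∈ S \ ({a, a⁻¹} : Finset G) := by rw [ht]; simp
            exact (Finset.mem_sdiff.mp this).2
          have hta : t ≠ a := by simp only [Finset.mem_insert, Finset.mem_singleton] at htn; tauto
          have htai : t ≠ a⁻¹ := by simp only [Finset.mem_insert, Finset.mem_singleton] at htn; tauto
          have ht2 : t * t = 1 := by
            by_contra ht2
            exact hfour a ha t htS ha2 ht2 hta htai
          have hSeq : S = insert t ({a, a⁻¹} : Finset G) := by
            have e : insert t ({a, a⁻¹} : Finset G) = S := by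
              rw [Finset.insert_eq, ← ht]
              exact Finset.sdiff_union_of_subset hsub2
            exact e.symm
          right; right; right
          have hsum : A = pmat t + (pmat a + pmat a⁻¹) := by
            rw [hA, hSeq, Finset.sum_insert htn, Finset.sum_pair hne]
          rw [hsum]
          refine L3 _ _ (pmat_sq t ht2) hL2 ?_
          rw [mul_add, add_mul, pmat_comm (hcent' t htS ht2 a),
            pmat_comm (hcent' t htS ht2 a⁻¹)]
    rcases key with h | h | h | h
    · rw [h, zero_mul, zero_mul, zero_mul]
    · have h2 : A ^ 2 - 1 = 0 := by rw [pow_two, h, sub_self]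
      rw [h2, mul_zero, zero_mul, zero_mul]
    · calc A * (A ^ 2 - 1) * (A ^ 2 - 4) * (A ^ 2 - 9)
          = (A ^ 3 - 4 * A) * ((A ^ 2 - 1) * (A ^ 2 - 9)) := by noncomm_ring
        _ = 0 := by rw [h, sub_self, zero_mul]
    · calc A * (A ^ 2 - 1) * (A ^ 2 - 4) * (A ^ 2 - 9)
          = (A * (A ^ 2 - 4)) * ((A ^ 2 - 1) * (A ^ 2 - 9)) := by noncomm_ring
        _ = 0 := by rw [h, mul_zero]
end
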